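/- Let θ̄ > 0 and ρ̄ > 0 and let the Helmholtz function H_θ̄ be as above, with p, e smooth satisfying ∂_ρ p > 0, ∂_θ e > 0 on the set O₁ = {(ρ, θ) : ρ̄/2 < ρ < 2ρ̄, θ̄/2 < θ < 2θ̄}. Then there exist constants C₁, C₂ > 0 such that for all (ρ, θ) ∈ O₁: C₁(|ρ − ρ̄|² + |θ − θ̄|²) ≤ H_θ̄(ρ,θ) − (ρ − ρ̄)∂_ρ H_θ̄(ρ̄, θ̄) − H_θ̄(ρ̄, θ̄) ≤ C₂(|ρ − ρ̄|² + |θ − θ̄|²). -/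

import Mathlib

open Set

lemma partial_snd (f : ℝ → ℝ → ℝ)
    (hf : ContDiffOn ℝ 2 (fun q : ℝ × ℝ => f q.1 q.2) {q : ℝ × ℝ | 0 < q.1 ∧ 0 < q.2}) :
    ∃ fθ : ℝ → ℝ → ℝ,
      ContinuousOn (fun q : ℝ × ℝ => fθ q.1 q.2) {q : ℝ × ℝ | 0 < q.1 ∧ 0 < q.2} ∧
      ∀ ρ θ : ℝ, 0 < ρ → 0 < θ → HasDerivAt (fun t => f ρ t) (fθ ρ θ) θ := by
  set U : Set (ℝ × ℝ) := {q : ℝ × ℝ | 0 < q.1 ∧ 0 < q.2} with hU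
  have hUopen : IsOpen U := by
    have : U = (Ioi (0:ℝ)) ×ˢ (Ioi (0:ℝ)) := by ext q; simp [hU, mem_prod]
    rw [this]; exact (isOpen_Ioi).prod isOpen_Ioi
  set F : ℝ × ℝ → ℝ := fun q => f q.1 q.2 with hF
  have hdiff : ∀ q ∈ U, HasFDerivAt F (fderiv ℝ F q) q := by
    intro q hq
    have := (hf.differentiableOn (by norm_num)).differentiableAt (hUopen.mem_nhds hq)
    exact this.hasFDerivAt
  refine ⟨fun ρ θ => fderiv ℝ F (ρ, θ) (0, 1), ?_, ?_⟩
  · have hc : ContinuousOn (fderiv ℝ F) U :=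
      hf.continuousOn_fderiv_of_isOpen hUopen (by norm_num)
    exact (ContinuousLinearMap.apply ℝ ℝ ((0:ℝ),(1:ℝ))).continuous.comp_continuousOn hc
  · intro ρ θ hρ hθ
    have hmem : (ρ, θ) ∈ U := ⟨hρ, hθ⟩
    have h1 : HasDerivAt (fun t : ℝ => ((ρ, t) : ℝ × ℝ)) ((0:ℝ), (1:ℝ)) θ :=
      (hasDerivAt_const θ ρ).prodMk (hasDerivAt_id θ)
    exact (hdiff _ hmem).comp_hasDerivAt θ h1

lemma partial_fst (f : ℝ → ℝ → ℝ)
    (hf : ContDiffOn ℝ 2 (fun q : ℝ × ℝ => f q.1 q.2) {q : ℝ × ℝ | 0 < q.1 ∧ 0 < q.2}) :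
    ∃ fρ : ℝ → ℝ → ℝ,
      ContinuousOn (fun q : ℝ × ℝ => fρ q.1 q.2) {q : ℝ × ℝ | 0 < q.1 ∧ 0 < q.2} ∧
      ∀ ρ θ : ℝ, 0 < ρ → 0 < θ → HasDerivAt (fun r => f r θ) (fρ ρ θ) ρ := by
  set U : Set (ℝ × ℝ) := {q : ℝ × ℝ | 0 < q.1 ∧ 0 < q.2} with hU
  have hUopen : IsOpen U := by
    have : U = (Ioi (0:ℝ)) ×ˢ (Ioi (0:ℝ)) := by ext q; simp [hU, mem_prod]
    rw [this]; exact (isOpen_Ioi).prod isOpen_Ioi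
  set F : ℝ × ℝ → ℝ := fun q => f q.1 q.2 with hF
  have hdiff : ∀ q ∈ U, HasFDerivAt F (fderiv ℝ F q) q := by
    intro q hq
    have := (hf.differentiableOn (by norm_num)).differentiableAt (hUopen.mem_nhds hq)
    exact this.hasFDerivAt
  refine ⟨fun ρ θ => fderiv ℝ F (ρ, θ) (1, 0), ?_, ?_⟩
  · have hc : ContinuousOn (fderiv ℝ F) U :=
      hf.continuousOn_fderiv_of_isOpen hUopen (by norm_num)
    exact (ContinuousLinearMap.apply ℝ ℝ ((1:ℝ),(0:ℝ))).continuous.comp_continuousOn hc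
  · intro ρ θ hρ hθ
    have hmem : (ρ, θ) ∈ U := ⟨hρ, hθ⟩
    have h1 : HasDerivAt (fun r : ℝ => ((r, θ) : ℝ × ℝ)) ((1:ℝ), (0:ℝ)) ρ :=
      (hasDerivAt_id ρ).prodMk (hasDerivAt_const ρ θ)
    exact (hdiff _ hmem).comp_hasDerivAt ρ h1

lemma incr_of_hasDeriv (f f' : ℝ → ℝ) (A B : ℝ) (hAB : A ≤ B)
    (hd : ∀ x ∈ Icc A B, HasDerivAt f (f' x) x) (h0 : ∀ x ∈ Icc A B, 0 ≤ f' x) :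
    f A ≤ f B := by
  have hmono : MonotoneOn f (Icc A B) := by
    apply monotoneOn_of_deriv_nonneg (convex_Icc A B)
    · exact fun x hx => ((hd x hx).continuousAt).continuousWithinAt
    · intro x hx
      rw [interior_Icc] at hx
      exact ((hd x (Ioo_subset_Icc_self hx)).differentiableAt).differentiableWithinAt
    · intro x hx
      rw [interior_Icc] at hx
      rw [(hd x (Ioo_subset_Icc_self hx)).deriv]
      exact h0 x (Ioo_subset_Icc_self hx)
  exact hmono (left_mem_Icc.mpr hAB) (right_mem_Icc.mpr hAB) hAB

lemma decr_of_hasDeriv (f f' : ℝ → ℝ) (A B : ℝ) (hAB : A ≤ B)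
    (hd : ∀ x ∈ Icc A B, HasDerivAt f (f' x) x) (h0 : ∀ x ∈ Icc A B, f' x ≤ 0) :
    f B ≤ f A := by
  have := incr_of_hasDeriv (fun x => -f x) (fun x => -f' x) A B hAB
    (fun x hx => (hd x hx).neg) (fun x hx => neg_nonneg.mpr (h0 x hx))
  linarith

set_option maxHeartbeats 3200000 in
/-- Quadratic coercivity of the relative Helmholtz function on the set
`O₁ = {(ρ,θ) : ρ̄/2 < ρ < 2ρ̄, θ̄/2 < θ < 2θ̄}`. -/
theorem stmt_11 (p e s : ℝ → ℝ → ℝ) (ρbar θbar : ℝ) (hρbar : 0 < ρbar) (hθbar : 0 < θbar)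
    (hp : ContDiffOn ℝ 2 (fun q : ℝ × ℝ => p q.1 q.2) {q : ℝ × ℝ | 0 < q.1 ∧ 0 < q.2})
    (he : ContDiffOn ℝ 2 (fun q : ℝ × ℝ => e q.1 q.2) {q : ℝ × ℝ | 0 < q.1 ∧ 0 < q.2})
    (hs : ContDiffOn ℝ 2 (fun q : ℝ × ℝ => s q.1 q.2) {q : ℝ × ℝ | 0 < q.1 ∧ 0 < q.2})
    (hGibbsθ : ∀ ρ θ : ℝ, 0 < ρ → 0 < θ →
      deriv (fun t => s ρ t) θ = (1 / θ) * deriv (fun t => e ρ t) θ)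
    (hGibbsρ : ∀ ρ θ : ℝ, 0 < ρ → 0 < θ →
      deriv (fun r => s r θ) ρ = (1 / θ) * (deriv (fun r => e r θ) ρ - p ρ θ / ρ ^ 2))
    (hpρ : ∀ ρ θ : ℝ, ρbar / 2 < ρ → ρ < 2 * ρbar → θbar / 2 < θ → θ < 2 * θbar →
      0 < deriv (fun r => p r θ) ρ)
    (heθ : ∀ ρ θ : ℝ, ρbar / 2 < ρ → ρ < 2 * ρbar → θbar / 2 < θ → θ < 2 * θbar →
      0 < deriv (fun t => e ρ t) θ) :
    ∃ C₁ > (0:ℝ), ∃ C₂ > (0:ℝ),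
      ∀ ρ θ : ℝ, ρbar / 2 < ρ → ρ < 2 * ρbar → θbar / 2 < θ → θ < 2 * θbar →
        C₁ * (|ρ - ρbar| ^ 2 + |θ - θbar| ^ 2) ≤
            ρ * (e ρ θ - θbar * s ρ θ)
              - (ρ - ρbar) * deriv (fun r => r * (e r θbar - θbar * s r θbar)) ρbar
              - ρbar * (e ρbar θbar - θbar * s ρbar θbar) ∧
          ρ * (e ρ θ - θbar * s ρ θ)
              - (ρ - ρbar) * deriv (fun r => r * (e r θbar - θbar * s r θbar)) ρbar
              - ρbar * (e ρbar θbar - θbar * s ρbar θbar) ≤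
            C₂ * (|ρ - ρbar| ^ 2 + |θ - θbar| ^ 2) := by
  obtain ⟨eθ, heθc, heθd⟩ := partial_snd e he
  obtain ⟨sθ, hsθc, hsθd⟩ := partial_snd s hs
  obtain ⟨eρ, heρc, heρd⟩ := partial_fst e he
  obtain ⟨sρ, hsρc, hsρd⟩ := partial_fst s hs
  obtain ⟨pρ, hpρc, hpρd⟩ := partial_fst p hp
  -- Gibbs relations in terms of the chosen partial derivatives
  have hGθ : ∀ ρ θ : ℝ, 0 < ρ → 0 < θ → sθ ρ θ = (1 / θ) * eθ ρ θ := by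
    intro ρ θ hρ hθ
    have h1 := (hsθd ρ θ hρ hθ).deriv
    have h2 := (heθd ρ θ hρ hθ).deriv
    rw [← h1, ← h2]
    exact hGibbsθ ρ θ hρ hθ
  have hGρ : ∀ ρ θ : ℝ, 0 < ρ → 0 < θ →
      sρ ρ θ = (1 / θ) * (eρ ρ θ - p ρ θ / ρ ^ 2) := by
    intro ρ θ hρ hθ
    have h1 := (hsρd ρ θ hρ hθ).deriv
    have h2 := (heρd ρ θ hρ hθ).deriv
    rw [← h1, ← h2]
    exact hGibbsρ ρ θ hρ hθ
  have heθpos : ∀ ρ θ : ℝ, ρbar / 2 < ρ → ρ < 2 * ρbar → θbar / 2 < θ → θ < 2 * θbar →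
      0 < eθ ρ θ := by
    intro ρ θ h1 h2 h3 h4
    have := heθ ρ θ h1 h2 h3 h4
    rwa [(heθd ρ θ (by linarith) (by linarith)).deriv] at this
  have hpρpos : ∀ ρ θ : ℝ, ρbar / 2 < ρ → ρ < 2 * ρbar → θbar / 2 < θ → θ < 2 * θbar →
      0 < pρ ρ θ := by
    intro ρ θ h1 h2 h3 h4
    have := hpρ ρ θ h1 h2 h3 h4
    rwa [(hpρd ρ θ (by linarith) (by linarith)).deriv] at this
  have hθne : θbar ≠ 0 := ne_of_gt hθbar
  have hρbne : ρbar ≠ 0 := ne_of_gt hρbar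
  -- the function g(r) = e(r,θ̄) - θ̄ s(r,θ̄) and φ(r) = g(r) + p(r,θ̄)/r
  set g : ℝ → ℝ := fun r => e r θbar - θbar * s r θbar with hgdef
  have hgd : ∀ r : ℝ, 0 < r → HasDerivAt g (p r θbar / r ^ 2) r := by
    intro r hr
    have hrne : r ≠ 0 := ne_of_gt hr
    have h3 : HasDerivAt g (eρ r θbar - θbar * sρ r θbar) r :=
      (heρd r θbar hr hθbar).sub ((hsρd r θbar hr hθbar).const_mul θbar)
    rw [show p r θbar / r ^ 2 = eρ r θbar - θbar * sρ r θbar from by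
      rw [hGρ r θbar hr hθbar]; field_simp; ring]
    exact h3
  set φ : ℝ → ℝ := fun r => g r + p r θbar / r with hφdef
  have hφd : ∀ r : ℝ, 0 < r → HasDerivAt φ (pρ r θbar / r) r := by
    intro r hr
    have hrne : r ≠ 0 := ne_of_gt hr
    have h2 : HasDerivAt (fun x : ℝ => p x θbar / x) ((pρ r θbar * r - p r θbar * 1) / r ^ 2) r :=
      (hpρd r θbar hr hθbar).div (hasDerivAt_id r) hrne
    have h3 := (hgd r hr).add h2
    rw [show pρ r θbar / r = p r θbar / r ^ 2 + (pρ r θbar * r - p r θbar * 1) / r ^ 2 from by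
      field_simp; ring]
    exact h3
  -- the relative Helmholtz function splits as H(ρ) + ρ K(ρ,θ)
  set H : ℝ → ℝ := fun r => r * g r - (r - ρbar) * φ ρbar - ρbar * g ρbar with hHdef
  set K : ℝ → ℝ → ℝ := fun ρ t => (e ρ t - θbar * s ρ t) - (e ρ θbar - θbar * s ρ θbar)
    with hKdef
  have hder : deriv (fun r => r * (e r θbar - θbar * s r θbar)) ρbar = φ ρbar := by
    have hder0 : HasDerivAt (fun r => r * (e r θbar - θbar * s r θbar))
        (1 * g ρbar + ρbar * (p ρbar θbar / ρbar ^ 2)) ρbar :=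
      (hasDerivAt_id ρbar).mul (hgd ρbar hρbar)
    rw [hder0.deriv, hφdef]
    simp only [hgdef]
    field_simp
  have hH0 : H ρbar = 0 := by simp only [hHdef]; ring
  have hHd : ∀ r : ℝ, 0 < r → HasDerivAt H (φ r - φ ρbar) r := by
    intro r hr
    have hrne : r ≠ 0 := ne_of_gt hr
    have h1 : HasDerivAt (fun x : ℝ => x * g x) (1 * g r + r * (p r θbar / r ^ 2)) r :=
      (hasDerivAt_id r).mul (hgd r hr)
    have h2 : HasDerivAt (fun x : ℝ => (x - ρbar) * φ ρbar) (1 * φ ρbar) r :=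
      ((hasDerivAt_id r).sub_const ρbar).mul_const _
    have h3 := (h1.sub h2).sub_const (ρbar * g ρbar)
    rw [show φ r - φ ρbar = 1 * g r + r * (p r θbar / r ^ 2) - 1 * φ ρbar from by
      simp only [hφdef]; field_simp]
    exact h3
  have hK0 : ∀ ρ : ℝ, K ρ θbar = 0 := by intro ρ; simp only [hKdef]; ring
  have hKd : ∀ ρ t : ℝ, 0 < ρ → 0 < t →
      HasDerivAt (fun u => K ρ u) (eθ ρ t * (1 - θbar / t)) t := by
    intro ρ t hρ ht
    have htne : t ≠ 0 := ne_of_gt ht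
    have h2 := ((heθd ρ t hρ ht).sub ((hsθd ρ t hρ ht).const_mul θbar)).sub_const
      (e ρ θbar - θbar * s ρ θbar)
    rw [show eθ ρ t * (1 - θbar / t) = eθ ρ t - θbar * sθ ρ t from by
      rw [hGθ ρ t hρ ht]; field_simp]
    exact h2
  -- compactness constants
  have hcont_p1 : ∀ A B : ℝ, 0 < A → ContinuousOn (fun r : ℝ => pρ r θbar / r) (Icc A B) := by
    intro A B hA
    apply ContinuousOn.div
    · exact hpρc.comp ((continuous_id.prodMk continuous_const).continuousOn)
        (fun r hr => ⟨by have := hr.1; simpa using by linarith, hθbar⟩)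
    · exact continuousOn_id
    · intro r hr h0
      have := hr.1; rw [h0] at this; linarith
  obtain ⟨r₀, hr₀mem, hr₀min'⟩ := isCompact_Icc.exists_isMinOn
    (⟨ρbar, by constructor <;> linarith⟩ : (Icc (3*ρbar/4) (3*ρbar/2)).Nonempty)
    (hcont_p1 (3*ρbar/4) (3*ρbar/2) (by linarith))
  have hr₀min := isMinOn_iff.mp hr₀min'
  set cp : ℝ := pρ r₀ θbar / r₀ with hcpdef
  have hr₀pos : 0 < r₀ := by have := hr₀mem.1; linarith
  have hcp_pos : 0 < cp :=
    div_pos (hpρpos r₀ θbar (by linarith [hr₀mem.1]) (by linarith [hr₀mem.2])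
      (by linarith) (by linarith)) hr₀pos
  have hcp_le : ∀ x ∈ Icc (3*ρbar/4) (3*ρbar/2), cp ≤ pρ x θbar / x := hr₀min
  obtain ⟨r₁, hr₁mem, hr₁max'⟩ := isCompact_Icc.exists_isMaxOn
    (⟨ρbar, by constructor <;> linarith⟩ : (Icc (ρbar/2) (2*ρbar)).Nonempty)
    (hcont_p1 (ρbar/2) (2*ρbar) (by linarith))
  have hr₁max := isMaxOn_iff.mp hr₁max'
  set Mp : ℝ := pρ r₁ θbar / r₁ with hMpdef
  have hMp_pos : 0 < Mp := by
    have h0 : 0 < pρ ρbar θbar / ρbar :=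
      div_pos (hpρpos ρbar θbar (by linarith) (by linarith) (by linarith) (by linarith)) hρbar
    exact lt_of_lt_of_le h0 (hr₁max ρbar ⟨by linarith, by linarith⟩)
  have hMp_ge : ∀ x ∈ Icc (ρbar/2) (2*ρbar), pρ x θbar / x ≤ Mp := hr₁max
  -- eθ min and max
  have hcont_e : ∀ (S : Set (ℝ × ℝ)), S ⊆ {q : ℝ × ℝ | 0 < q.1 ∧ 0 < q.2} →
      ContinuousOn (fun q : ℝ × ℝ => eθ q.1 q.2) S := fun S hS => heθc.mono hS
  obtain ⟨q₀, hq₀mem, hq₀min'⟩ :=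
    (isCompact_Icc.prod isCompact_Icc).exists_isMinOn
    (⟨(ρbar, θbar), ⟨⟨by linarith, by linarith⟩, ⟨by linarith, by linarith⟩⟩⟩ :
      ((Icc (3*ρbar/4) (3*ρbar/2)) ×ˢ (Icc (3*θbar/4) (3*θbar/2))).Nonempty)
    (hcont_e _ (fun q hq => ⟨by have := hq.1.1; simpa using by linarith,
      by have := hq.2.1; simpa using by linarith⟩))
  have hq₀min := isMinOn_iff.mp hq₀min'
  set ce : ℝ := eθ q₀.1 q₀.2 with hcedef
  have hce_pos : 0 < ce := heθpos q₀.1 q₀.2 (by linarith [hq₀mem.1.1]) (by linarith [hq₀mem.1.2])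
    (by linarith [hq₀mem.2.1]) (by linarith [hq₀mem.2.2])
  have hce_le : ∀ x t : ℝ, x ∈ Icc (3*ρbar/4) (3*ρbar/2) → t ∈ Icc (3*θbar/4) (3*θbar/2) →
      ce ≤ eθ x t := fun x t hx ht => hq₀min (x, t) ⟨hx, ht⟩
  obtain ⟨q₁, hq₁mem, hq₁max'⟩ :=
    (isCompact_Icc.prod isCompact_Icc).exists_isMaxOn
    (⟨(ρbar, θbar), ⟨⟨by linarith, by linarith⟩, ⟨by linarith, by linarith⟩⟩⟩ :
      ((Icc (ρbar/2) (2*ρbar)) ×ˢ (Icc (θbar/2) (2*θbar))).Nonempty)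
    (hcont_e _ (fun q hq => ⟨by have := hq.1.1; simpa using by linarith,
      by have := hq.2.1; simpa using by linarith⟩))
  have hq₁max := isMaxOn_iff.mp hq₁max'
  set Me : ℝ := eθ q₁.1 q₁.2 with hMedef
  have hMe_pos : 0 < Me := lt_of_lt_of_le
    (heθpos ρbar θbar (by linarith) (by linarith) (by linarith) (by linarith))
    (hq₁max (ρbar, θbar) ⟨⟨by linarith, by linarith⟩, ⟨by linarith, by linarith⟩⟩)
  have hMe_ge : ∀ x t : ℝ, x ∈ Icc (ρbar/2) (2*ρbar) → t ∈ Icc (θbar/2) (2*θbar) →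
      eθ x t ≤ Me := fun x t hx ht => hq₁max (x, t) ⟨hx, ht⟩
  set β : ℝ := ce / (3 * θbar) with hβdef
  have hβpos : 0 < β := div_pos hce_pos (by linarith)
  set γ : ℝ := Me / θbar with hγdef
  have hγpos : 0 < γ := div_pos hMe_pos hθbar
  clear_value g φ H K cp Mp ce Me β γ
  -- K is nonnegative on the box
  have hKnonneg : ∀ ρ θ : ℝ, ρbar/2 < ρ → ρ < 2*ρbar → θbar/2 < θ → θ < 2*θbar →
      0 ≤ K ρ θ := by
    intro ρ θ h1 h2 h3 h4
    have hρ0 : 0 < ρ := by linarith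
    rcases le_total θbar θ with hc | hc
    · have key := incr_of_hasDeriv (fun t => K ρ t) (fun t => eθ ρ t * (1 - θbar / t)) θbar θ hc
        (fun t ht => hKd ρ t hρ0 (by linarith [ht.1]))
        (fun t ht => by
          have ht0 : (0:ℝ) < t := by linarith [ht.1]
          have hd1 : θbar / t ≤ 1 := by rw [div_le_one ht0]; exact ht.1
          exact mul_nonneg
            (le_of_lt (heθpos ρ t h1 h2 (by linarith [ht.1]) (by linarith [ht.2])))
            (by linarith))
      rw [hK0 ρ] at key; exact key
    · have key := decr_of_hasDeriv (fun t => K ρ t) (fun t => eθ ρ t * (1 - θbar / t)) θ θbar hc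
        (fun t ht => hKd ρ t hρ0 (by linarith [ht.1]))
        (fun t ht => by
          have ht0 : (0:ℝ) < t := by linarith [ht.1]
          have hd1 : 1 ≤ θbar / t := by rw [le_div_iff₀ ht0]; nlinarith [ht.2]
          have hepos := le_of_lt (heθpos ρ t h1 h2 (by linarith [ht.1]) (by linarith [ht.2]))
          show eθ ρ t * (1 - θbar / t) ≤ 0
          nlinarith)
      rw [hK0 ρ] at key; exact key
  -- derivative of the comparison functions
  have hKcmpd : ∀ (c : ℝ) (ρ t : ℝ), 0 < ρ → 0 < t →
      HasDerivAt (fun u => K ρ u - c * (u - θbar)^2)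
        (eθ ρ t * (1 - θbar / t) - c * (2*(t - θbar))) t := by
    intro c ρ t hρ0 ht
    have h1 : HasDerivAt (fun u : ℝ => c * (u - θbar)^2) (c * (2*(t - θbar))) t := by
      have := (((hasDerivAt_id t).sub_const θbar).pow 2).const_mul c
      simpa using this
    exact (hKd ρ t hρ0 ht).sub h1
  -- middle quadratic lower bound for K
  have hKmid : ∀ ρ ∈ Icc (3*ρbar/4) (3*ρbar/2), ∀ θ ∈ Icc (3*θbar/4) (3*θbar/2),
      β * (θ - θbar)^2 ≤ K ρ θ := by
    intro ρ hρ θ hθ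
    have hρ0 : 0 < ρ := by have := hρ.1; linarith
    rcases le_total θbar θ with hc | hc
    · have key := incr_of_hasDeriv (fun u => K ρ u - β * (u - θbar)^2)
        (fun t => eθ ρ t * (1 - θbar / t) - β * (2*(t - θbar))) θbar θ hc
        (fun t ht => hKcmpd β ρ t hρ0 (by linarith [ht.1]))
        (fun t ht => by
          show 0 ≤ eθ ρ t * (1 - θbar / t) - β * (2*(t - θbar))
          have ht0 : (0:ℝ) < t := by linarith [ht.1]
          have hle : ce ≤ eθ ρ t := hce_le ρ t hρ
            ⟨by linarith [ht.1], by linarith [ht.2, hθ.2]⟩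
          have h1t : 1 - θbar / t = (t - θbar) / t := by field_simp
          rw [h1t, hβdef, sub_nonneg]
          have e1 : ce/(3*θbar)*(2*(t-θbar)) = (2*ce*(t-θbar))/(3*θbar) := by ring
          have e2 : eθ ρ t * ((t-θbar)/t) = (eθ ρ t * (t-θbar))/t := by ring
          rw [e1, e2, div_le_div_iff₀ (by linarith) ht0]
          nlinarith [mul_nonneg (mul_nonneg (by linarith : (0:ℝ) ≤ 3*θbar)
              (sub_nonneg.mpr ht.1)) (sub_nonneg.mpr hle),
            mul_nonneg (mul_nonneg hce_pos.le (sub_nonneg.mpr ht.1))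
              (by linarith [ht.2, hθ.2] : (0:ℝ) ≤ 3*θbar - 2*t)])
      rw [hK0 ρ] at key
      nlinarith [key]
    · have key := decr_of_hasDeriv (fun u => K ρ u - β * (u - θbar)^2)
        (fun t => eθ ρ t * (1 - θbar / t) - β * (2*(t - θbar))) θ θbar hc
        (fun t ht => hKcmpd β ρ t hρ0 (by linarith [ht.1, hθ.1]))
        (fun t ht => by
          show eθ ρ t * (1 - θbar / t) - β * (2*(t - θbar)) ≤ 0
          have ht0 : (0:ℝ) < t := by linarith [ht.1, hθ.1]
          have hle : ce ≤ eθ ρ t := hce_le ρ t hρ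
            ⟨by linarith [ht.1, hθ.1], by linarith [ht.2]⟩
          have h1t : 1 - θbar / t = (t - θbar) / t := by field_simp
          rw [h1t, hβdef, sub_nonpos]
          have e1 : ce/(3*θbar)*(2*(t-θbar)) = (2*ce*(t-θbar))/(3*θbar) := by ring
          have e2 : eθ ρ t * ((t-θbar)/t) = (eθ ρ t * (t-θbar))/t := by ring
          rw [e1, e2, div_le_div_iff₀ ht0 (by linarith)]
          nlinarith [mul_nonneg (mul_nonneg (by linarith : (0:ℝ) ≤ 3*θbar)
              (sub_nonneg.mpr ht.2)) (sub_nonneg.mpr hle),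
            mul_nonneg (mul_nonneg hce_pos.le (sub_nonneg.mpr ht.2))
              (by linarith [ht.2] : (0:ℝ) ≤ 3*θbar - 2*t)])
      rw [hK0 ρ] at key
      nlinarith [key]
  -- lower bound for K on the whole θ-range (ρ in middle range)
  have hKlow : ∀ ρ ∈ Icc (3*ρbar/4) (3*ρbar/2), ∀ θ : ℝ, θbar/2 < θ → θ < 2*θbar →
      β/4 * (θ - θbar)^2 ≤ K ρ θ := by
    intro ρ hρ θ h3 h4
    have hρ0 : 0 < ρ := by have := hρ.1; linarith
    have h1' : ρbar/2 < ρ := by have := hρ.1; linarith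
    have h2' : ρ < 2*ρbar := by have := hρ.2; linarith
    rcases le_total θ (3*θbar/2) with hc1 | hc1
    · rcases le_total (3*θbar/4) θ with hc2 | hc2
      · have hstep := hKmid ρ hρ θ ⟨hc2, hc1⟩
        have hcmp : β/4 * (θ - θbar)^2 ≤ β * (θ - θbar)^2 :=
          mul_le_mul_of_nonneg_right (by linarith) (sq_nonneg _)
        exact le_trans hcmp hstep
      · have hdec := decr_of_hasDeriv (fun u => K ρ u)
          (fun t => eθ ρ t * (1 - θbar / t)) θ (3*θbar/4) hc2
          (fun t ht => hKd ρ t hρ0 (by linarith [ht.1]))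
          (fun t ht => by
            have ht0 : (0:ℝ) < t := by linarith [ht.1]
            have hd1 : 1 ≤ θbar / t := by rw [le_div_iff₀ ht0]; nlinarith [ht.2]
            have hepos := le_of_lt (heθpos ρ t h1' h2' (by linarith [ht.1])
              (by linarith [ht.2]))
            nlinarith)
        have h2 := hKmid ρ hρ (3*θbar/4) ⟨le_refl _, by linarith⟩
        nlinarith [hdec, h2, mul_nonneg hβpos.le (mul_nonneg
          (by linarith : (0:ℝ) ≤ θ - θbar/2) (by linarith : (0:ℝ) ≤ 3*θbar/2 - θ))]
    · have hinc := incr_of_hasDeriv (fun u => K ρ u)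
        (fun t => eθ ρ t * (1 - θbar / t)) (3*θbar/2) θ hc1
        (fun t ht => hKd ρ t hρ0 (by linarith [ht.1]))
        (fun t ht => by
          have ht0 : (0:ℝ) < t := by linarith [ht.1]
          have hd1 : θbar / t ≤ 1 := by rw [div_le_one ht0]; linarith [ht.1]
          exact mul_nonneg (le_of_lt (heθpos ρ t h1' h2' (by linarith [ht.1])
            (by linarith [ht.2]))) (by linarith))
      have h2 := hKmid ρ hρ (3*θbar/2) ⟨by linarith, le_refl _⟩
      nlinarith [hinc, h2, mul_nonneg hβpos.le (mul_nonneg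
        (by linarith : (0:ℝ) ≤ 2*θbar - θ) (by linarith : (0:ℝ) ≤ θ))]
  -- upper bound for K
  have hKup : ∀ ρ θ : ℝ, ρbar/2 < ρ → ρ < 2*ρbar → θbar/2 < θ → θ < 2*θbar →
      K ρ θ ≤ γ * (θ - θbar)^2 := by
    intro ρ θ h1 h2 h3 h4
    have hρ0 : 0 < ρ := by linarith
    have hcmpd : ∀ t : ℝ, 0 < t →
        HasDerivAt (fun u => γ * (u - θbar)^2 - K ρ u)
          (γ * (2*(t - θbar)) - eθ ρ t * (1 - θbar / t)) t := by
      intro t ht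
      have h1' : HasDerivAt (fun u : ℝ => γ * (u - θbar)^2) (γ * (2*(t - θbar))) t := by
        have := (((hasDerivAt_id t).sub_const θbar).pow 2).const_mul γ
        simpa using this
      exact h1'.sub (hKd ρ t hρ0 ht)
    rcases le_total θbar θ with hc | hc
    · have key := incr_of_hasDeriv (fun u => γ * (u - θbar)^2 - K ρ u)
        (fun t => γ * (2*(t - θbar)) - eθ ρ t * (1 - θbar / t)) θbar θ hc
        (fun t ht => hcmpd t (by linarith [ht.1]))
        (fun t ht => by
          show 0 ≤ γ * (2*(t - θbar)) - eθ ρ t * (1 - θbar / t)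
          have ht0 : (0:ℝ) < t := by linarith [ht.1]
          have hle : eθ ρ t ≤ Me := hMe_ge ρ t ⟨by linarith, by linarith⟩
            ⟨by linarith [ht.1], by linarith [ht.2]⟩
          have h1t : 1 - θbar / t = (t - θbar) / t := by field_simp
          rw [h1t, hγdef, sub_nonneg]
          have e1 : Me/θbar*(2*(t-θbar)) = (2*Me*(t-θbar))/θbar := by ring
          have e2 : eθ ρ t * ((t-θbar)/t) = (eθ ρ t * (t-θbar))/t := by ring
          rw [e1, e2, div_le_div_iff₀ ht0 hθbar]
          nlinarith [mul_nonneg (mul_nonneg hθbar.le (sub_nonneg.mpr ht.1))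
              (sub_nonneg.mpr hle),
            mul_nonneg (mul_nonneg hMe_pos.le (sub_nonneg.mpr ht.1))
              (by linarith [ht.1] : (0:ℝ) ≤ 2*t - θbar)])
      rw [hK0 ρ] at key
      nlinarith [key]
    · have key := decr_of_hasDeriv (fun u => γ * (u - θbar)^2 - K ρ u)
        (fun t => γ * (2*(t - θbar)) - eθ ρ t * (1 - θbar / t)) θ θbar hc
        (fun t ht => hcmpd t (by linarith [ht.1]))
        (fun t ht => by
          show γ * (2*(t - θbar)) - eθ ρ t * (1 - θbar / t) ≤ 0
          have ht0 : (0:ℝ) < t := by linarith [ht.1]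
          have hle : eθ ρ t ≤ Me := hMe_ge ρ t ⟨by linarith, by linarith⟩
            ⟨by linarith [ht.1], by linarith [ht.2]⟩
          have h1t : 1 - θbar / t = (t - θbar) / t := by field_simp
          rw [h1t, hγdef, sub_nonpos]
          have e1 : Me/θbar*(2*(t-θbar)) = (2*Me*(t-θbar))/θbar := by ring
          have e2 : eθ ρ t * ((t-θbar)/t) = (eθ ρ t * (t-θbar))/t := by ring
          rw [e1, e2, div_le_div_iff₀ hθbar ht0]
          nlinarith [mul_nonneg (mul_nonneg hθbar.le (sub_nonneg.mpr ht.2))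
              (sub_nonneg.mpr hle),
            mul_nonneg (mul_nonneg hMe_pos.le (sub_nonneg.mpr ht.2))
              (by linarith [ht.1] : (0:ℝ) ≤ 2*t - θbar)])
      rw [hK0 ρ] at key
      nlinarith [key]
  -- φ comparison estimates
  have hφ_lb : ∀ A B : ℝ, 3*ρbar/4 ≤ A → A ≤ B → B ≤ 3*ρbar/2 → cp*(B-A) ≤ φ B - φ A := by
    intro A B hA hAB hB
    have key := incr_of_hasDeriv (fun x => φ x - cp*x) (fun x => pρ x θbar / x - cp) A B hAB
      (fun x hx => by
        have hx0 : 0 < x := by have := hx.1; linarith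
        have h1 : HasDerivAt (fun y : ℝ => cp*y) cp x := by
          simpa using (hasDerivAt_id x).const_mul cp
        exact (hφd x hx0).sub h1)
      (fun x hx => sub_nonneg.mpr (hcp_le x ⟨by linarith [hx.1], by linarith [hx.2]⟩))
    linarith [key]
  have hφ_ub : ∀ A B : ℝ, ρbar/2 ≤ A → A ≤ B → B ≤ 2*ρbar → φ B - φ A ≤ Mp*(B-A) := by
    intro A B hA hAB hB
    have key := incr_of_hasDeriv (fun x => Mp*x - φ x) (fun x => Mp - pρ x θbar / x) A B hAB
      (fun x hx => by
        have hx0 : 0 < x := by have := hx.1; linarith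
        have h1 : HasDerivAt (fun y : ℝ => Mp*y) Mp x := by
          simpa using (hasDerivAt_id x).const_mul Mp
        exact h1.sub (hφd x hx0))
      (fun x hx => sub_nonneg.mpr (hMp_ge x ⟨by linarith [hx.1], by linarith [hx.2]⟩))
    linarith [key]
  have hφ_mono : ∀ A B : ℝ, ρbar/2 < A → A ≤ B → B < 2*ρbar → φ A ≤ φ B := by
    intro A B hA hAB hB
    exact incr_of_hasDeriv φ (fun x => pρ x θbar / x) A B hAB
      (fun x hx => hφd x (by linarith [hx.1]))
      (fun x hx => le_of_lt (div_pos (hpρpos x θbar (by linarith [hx.1])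
        (by linarith [hx.2]) (by linarith) (by linarith)) (by linarith [hx.1])))
  -- derivative of H-comparison functions
  have hHcmpd : ∀ (c : ℝ) (r : ℝ), 0 < r →
      HasDerivAt (fun x => H x - c * (x - ρbar)^2)
        ((φ r - φ ρbar) - c * (2*(r - ρbar))) r := by
    intro c r hr
    have h1 : HasDerivAt (fun x : ℝ => c * (x - ρbar)^2) (c * (2*(r - ρbar))) r := by
      have := (((hasDerivAt_id r).sub_const ρbar).pow 2).const_mul c
      simpa using this
    exact (hHd r hr).sub h1
  -- middle quadratic lower bound for H
  have hHmid : ∀ ρ ∈ Icc (3*ρbar/4) (3*ρbar/2), cp/2*(ρ - ρbar)^2 ≤ H ρ := by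
    intro ρ hρ
    rcases le_total ρbar ρ with hc | hc
    · have key := incr_of_hasDeriv (fun r => H r - cp/2*(r - ρbar)^2)
        (fun r => (φ r - φ ρbar) - cp/2 * (2*(r - ρbar))) ρbar ρ hc
        (fun r hr => hHcmpd (cp/2) r (by linarith [hr.1]))
        (fun r hr => by
          show 0 ≤ (φ r - φ ρbar) - cp/2 * (2*(r - ρbar))
          have := hφ_lb ρbar r (by linarith) hr.1 (by linarith [hr.2, hρ.2])
          linarith)
      nlinarith [key, hH0]
    · have key := decr_of_hasDeriv (fun r => H r - cp/2*(r - ρbar)^2)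
        (fun r => (φ r - φ ρbar) - cp/2 * (2*(r - ρbar))) ρ ρbar hc
        (fun r hr => hHcmpd (cp/2) r (by linarith [hr.1, hρ.1]))
        (fun r hr => by
          show (φ r - φ ρbar) - cp/2 * (2*(r - ρbar)) ≤ 0
          have := hφ_lb r ρbar (by linarith [hr.1, hρ.1]) hr.2 (by linarith)
          linarith)
      nlinarith [key, hH0]
  -- monotone extension of H outside the middle interval
  have hH32 : ∀ ρ : ℝ, 3*ρbar/2 ≤ ρ → ρ < 2*ρbar → H (3*ρbar/2) ≤ H ρ := by
    intro ρ hA hB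
    exact incr_of_hasDeriv H (fun r => φ r - φ ρbar) (3*ρbar/2) ρ hA
      (fun r hr => hHd r (by linarith [hr.1]))
      (fun r hr => sub_nonneg.mpr (hφ_mono ρbar r (by linarith) (by linarith [hr.1])
        (by linarith [hr.2])))
  have hH34 : ∀ ρ : ℝ, ρbar/2 < ρ → ρ ≤ 3*ρbar/4 → H (3*ρbar/4) ≤ H ρ := by
    intro ρ hA hB
    exact decr_of_hasDeriv H (fun r => φ r - φ ρbar) ρ (3*ρbar/4) hB
      (fun r hr => hHd r (by linarith [hr.1]))
      (fun r hr => sub_nonpos.mpr (hφ_mono r ρbar (by linarith [hr.1])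
        (by linarith [hr.2]) (by linarith)))
  -- upper bound for H
  have hHup : ∀ ρ : ℝ, ρbar/2 < ρ → ρ < 2*ρbar → H ρ ≤ Mp/2*(ρ - ρbar)^2 := by
    intro ρ h1 h2
    rcases le_total ρbar ρ with hc | hc
    · have key := incr_of_hasDeriv (fun r => Mp/2*(r - ρbar)^2 - H r)
        (fun r => Mp/2 * (2*(r - ρbar)) - (φ r - φ ρbar)) ρbar ρ hc
        (fun r hr => by
          have h0 : 0 < r := by linarith [hr.1]
          have ha : HasDerivAt (fun x : ℝ => Mp/2 * (x - ρbar)^2) (Mp/2 * (2*(r - ρbar))) r := by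
            have := (((hasDerivAt_id r).sub_const ρbar).pow 2).const_mul (Mp/2)
            simpa using this
          exact ha.sub (hHd r h0))
        (fun r hr => by
          show 0 ≤ Mp/2 * (2*(r - ρbar)) - (φ r - φ ρbar)
          have := hφ_ub ρbar r (by linarith) hr.1 (by linarith [hr.2])
          linarith)
      nlinarith [key, hH0]
    · have key := decr_of_hasDeriv (fun r => Mp/2*(r - ρbar)^2 - H r)
        (fun r => Mp/2 * (2*(r - ρbar)) - (φ r - φ ρbar)) ρ ρbar hc
        (fun r hr => by
          have h0 : 0 < r := by linarith [hr.1]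
          have ha : HasDerivAt (fun x : ℝ => Mp/2 * (x - ρbar)^2) (Mp/2 * (2*(r - ρbar))) r := by
            have := (((hasDerivAt_id r).sub_const ρbar).pow 2).const_mul (Mp/2)
            simpa using this
          exact ha.sub (hHd r h0))
        (fun r hr => by
          show Mp/2 * (2*(r - ρbar)) - (φ r - φ ρbar) ≤ 0
          have := hφ_ub r ρbar (by linarith [hr.1]) hr.2 (by linarith)
          linarith)
      nlinarith [key, hH0]
  -- final constants
  refine ⟨min (min (cp/32) (ρbar*β/8)) ((cp*ρbar^2/32)/(ρbar^2+θbar^2)), ?_,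
    Mp/2 + 2*ρbar*γ, ?_, ?_⟩
  · apply lt_min
    · apply lt_min
      · linarith
      · exact div_pos (mul_pos hρbar hβpos) (by norm_num)
    · exact div_pos (div_pos (mul_pos hcp_pos (by positivity)) (by norm_num)) (by positivity)
  · have h2 : 0 < 2*ρbar*γ := mul_pos (by linarith) hγpos
    linarith
  · intro ρ θ h1 h2 h3 h4
    have hρ0 : 0 < ρ := by linarith
    have hexpr : ρ * (e ρ θ - θbar * s ρ θ)
        - (ρ - ρbar) * deriv (fun r => r * (e r θbar - θbar * s r θbar)) ρbar
        - ρbar * (e ρbar θbar - θbar * s ρbar θbar) = H ρ + ρ * K ρ θ := by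
      rw [hder, hHdef, hKdef, hgdef]
      ring
    rw [hexpr, sq_abs, sq_abs]
    have hKn := hKnonneg ρ θ h1 h2 h3 h4
    constructor
    · -- lower bound
      by_cases hmidρ : ρ ∈ Icc (3*ρbar/4) (3*ρbar/2)
      · have hH := hHmid ρ hmidρ
        have hK := hKlow ρ hmidρ θ h3 h4
        have hρK : ρ * (β/4*(θ-θbar)^2) ≤ ρ * K ρ θ := mul_le_mul_of_nonneg_left hK hρ0.le
        have hmin1 : min (min (cp/32) (ρbar*β/8)) ((cp*ρbar^2/32)/(ρbar^2+θbar^2)) ≤ cp/32 :=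
          le_trans (min_le_left _ _) (min_le_left _ _)
        have hmin2 : min (min (cp/32) (ρbar*β/8)) ((cp*ρbar^2/32)/(ρbar^2+θbar^2)) ≤ ρbar*β/8 :=
          le_trans (min_le_left _ _) (min_le_right _ _)
        have hq1 : min (min (cp/32) (ρbar*β/8)) ((cp*ρbar^2/32)/(ρbar^2+θbar^2)) * (ρ-ρbar)^2
            ≤ cp/32 * (ρ-ρbar)^2 := mul_le_mul_of_nonneg_right hmin1 (sq_nonneg _)
        have hq2 : min (min (cp/32) (ρbar*β/8)) ((cp*ρbar^2/32)/(ρbar^2+θbar^2)) * (θ-θbar)^2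
            ≤ ρbar*β/8 * (θ-θbar)^2 := mul_le_mul_of_nonneg_right hmin2 (sq_nonneg _)
        have hq3 : cp/32 * (ρ-ρbar)^2 ≤ cp/2 * (ρ-ρbar)^2 :=
          mul_le_mul_of_nonneg_right (by linarith) (sq_nonneg _)
        have hq4 : ρbar*β/8 * (θ-θbar)^2 ≤ ρ * (β/4*(θ-θbar)^2) := by
          have h34 : 3*ρbar/4 ≤ ρ := hmidρ.1
          have : ρbar*β/8 ≤ ρ * (β/4) := by nlinarith
          calc ρbar*β/8 * (θ-θbar)^2 ≤ (ρ * (β/4)) * (θ-θbar)^2 :=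
                mul_le_mul_of_nonneg_right this (sq_nonneg _)
            _ = ρ * (β/4*(θ-θbar)^2) := by ring
        nlinarith [hq1, hq2, hq3, hq4, hH, hρK]
      · -- ρ away from ρbar : use the positive gap of H
        rw [mem_Icc] at hmidρ
        push_neg at hmidρ
        have hHg : cp*ρbar^2/32 ≤ H ρ := by
          rcases lt_or_ge ρ (3*ρbar/4) with hc | hc
          · have hstep := hH34 ρ h1 hc.le
            have hm := hHmid (3*ρbar/4) ⟨le_refl _, by linarith⟩
            nlinarith [hstep, hm]
          · have hc' : 3*ρbar/2 < ρ := hmidρ hc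
            have hstep := hH32 ρ hc'.le h2
            have hm := hHmid (3*ρbar/2) ⟨by linarith, le_refl _⟩
            nlinarith [hstep, hm]
        have hs1 : (ρ - ρbar)^2 ≤ ρbar^2 := by nlinarith
        have hs2 : (θ - θbar)^2 ≤ θbar^2 := by nlinarith
        have hS : (0:ℝ) < ρbar^2 + θbar^2 := by positivity
        have hC1 : min (min (cp/32) (ρbar*β/8)) ((cp*ρbar^2/32)/(ρbar^2+θbar^2))
            ≤ (cp*ρbar^2/32)/(ρbar^2+θbar^2) := min_le_right _ _
        have hsum0 : (0:ℝ) ≤ (ρ-ρbar)^2 + (θ-θbar)^2 :=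
          add_nonneg (sq_nonneg _) (sq_nonneg _)
        have hchain : min (min (cp/32) (ρbar*β/8)) ((cp*ρbar^2/32)/(ρbar^2+θbar^2)) *
            ((ρ-ρbar)^2 + (θ-θbar)^2) ≤ (cp*ρbar^2/32)/(ρbar^2+θbar^2) * (ρbar^2+θbar^2) := by
          apply mul_le_mul hC1 (by linarith) hsum0
          exact le_of_lt (div_pos (div_pos (mul_pos hcp_pos (by positivity)) (by norm_num)) hS)
        have heq : (cp*ρbar^2/32)/(ρbar^2+θbar^2) * (ρbar^2+θbar^2) = cp*ρbar^2/32 :=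
          div_mul_cancel₀ _ hS.ne'
        have hρK : 0 ≤ ρ * K ρ θ := mul_nonneg hρ0.le hKn
        linarith [hchain, heq, hHg, hρK]
    · -- upper bound
      have hH := hHup ρ h1 h2
      have hKu := hKup ρ θ h1 h2 h3 h4
      have h5 : ρ * K ρ θ ≤ 2*ρbar * (γ*(θ-θbar)^2) := by
        calc ρ * K ρ θ ≤ 2*ρbar * K ρ θ := mul_le_mul_of_nonneg_right (by linarith) hKn
          _ ≤ 2*ρbar * (γ*(θ-θbar)^2) := mul_le_mul_of_nonneg_left hKu (by linarith)
      nlinarith [hH, h5, mul_nonneg hMp_pos.le (sq_nonneg (θ-θbar)),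
        mul_nonneg (mul_nonneg (by linarith : (0:ℝ) ≤ 2*ρbar) hγpos.le) (sq_nonneg (ρ-ρbar))]
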